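/- Let D be a squarefree integer, p an odd prime, and let c, k, ℓ be positive integers with gcd(c·k, p) = 1. Suppose N = c·k·p^ℓ − 1 is an odd prime with Jacobi symbol (D/N) = −1, and let w ∈ ℤ[√D] satisfy N(w) ≡ 1 (mod N). Then at least one of the following holds: (i) w^{c·k} ≡ 1 (mod N); or (ii) there exists an integer j with 0 ≤ j < ℓ such that Φ_p(w^{c·k·p^{j}}) ≡ 0 (mod N). -/

import Mathlib

open Polynomial

/-- If `(D/N) = -1` for an odd prime `N`, then `N` is prime in `ℤ[√D]`. -/
lemma aux_prime_zsqrtd (D : ℤ) (N : ℕ) (hNprime : N.Prime)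
    (hJ : jacobiSym D N = -1) : Prime (N : Zsqrtd D) := by
  haveI : Fact N.Prime := ⟨hNprime⟩
  have hns : ¬ IsSquare ((D : ℤ) : ZMod N) := by
    rw [← legendreSym.eq_neg_one_iff (p := N), jacobiSym.legendreSym.to_jacobiSym]
    exact hJ
  have key : ∀ u : Zsqrtd D, (N : Zsqrtd D) ∣ u ↔
      ((u.re : ZMod N) = 0 ∧ (u.im : ZMod N) = 0) := by
    intro u
    rw [show ((N : Zsqrtd D)) = (((N : ℤ)) : Zsqrtd D) by push_cast; rfl,
      Zsqrtd.intCast_dvd]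
    simp [← ZMod.intCast_zmod_eq_zero_iff_dvd]
  refine ⟨?_, ?_, ?_⟩
  · intro h
    have := congrArg Zsqrtd.re h
    simp at this
    exact hNprime.ne_zero (by exact_mod_cast this)
  · intro h
    rw [← Zsqrtd.norm_eq_one_iff] at h
    rw [show ((N : Zsqrtd D)) = (((N : ℤ)) : Zsqrtd D) by push_cast; rfl,
      Zsqrtd.norm_intCast] at h
    rw [Int.natAbs_mul, Int.natAbs_natCast] at h
    nlinarith [hNprime.two_le]
  · intro z z' hzz
    rw [key] at hzz
    rw [key, key]
    rw [Zsqrtd.re_mul, Zsqrtd.im_mul] at hzz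
    push_cast at hzz
    set a : ZMod N := ((z.re : ZMod N)) with ha
    set b : ZMod N := ((z.im : ZMod N)) with hb
    set a' : ZMod N := ((z'.re : ZMod N)) with ha'
    set b' : ZMod N := ((z'.im : ZMod N)) with hb'
    obtain ⟨h1, h2⟩ := hzz
    by_cases hz : a = 0 ∧ b = 0
    · exact Or.inl hz
    · have ht : a ^ 2 - ((D : ℤ) : ZMod N) * b ^ 2 ≠ 0 := by
        intro ht
        by_cases hbz : b = 0
        · apply hz
          have : a ^ 2 = 0 := by rw [hbz] at ht; ring_nf at ht ⊢; simpa using ht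
          exact ⟨pow_eq_zero_iff (n := 2) (by norm_num) |>.mp this, hbz⟩
        · exact hns ⟨a * b⁻¹, by field_simp; linear_combination -ht⟩
      right
      constructor
      · have h3 : (a ^ 2 - ((D : ℤ) : ZMod N) * b ^ 2) * a' = 0 := by
          linear_combination a * h1 - ((D : ℤ) : ZMod N) * b * h2
        exact (mul_eq_zero.mp h3).resolve_left ht
      · have h4 : (a ^ 2 - ((D : ℤ) : ZMod N) * b ^ 2) * b' = 0 := by
          linear_combination a * h2 - b * h1
        exact (mul_eq_zero.mp h4).resolve_left ht

set_option maxHeartbeats 1000000 in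
/-- Theorem 1.3 (Generalized Miller–Rabin): if `N = c·k·p^ℓ − 1` is an odd prime
then every norm-one `w` satisfies one of the two conditions. -/
theorem stmt_2 (D : ℤ) (hD : Squarefree D)
    (p : ℕ) (hp : p.Prime) (hpodd : Odd p)
    (c k ℓ : ℕ) (hc : 0 < c) (hk : 0 < k) (hℓ : 0 < ℓ)
    (hgcd : Nat.gcd (c * k) p = 1)
    (N : ℕ) (hN : N = c * k * p ^ ℓ - 1) (hNodd : Odd N) (hNprime : N.Prime)
    (hJ : jacobiSym D N = -1)
    (w : Zsqrtd D)
    (hnorm : (N : ℤ) ∣ (w.norm - 1)) :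
    (N : Zsqrtd D) ∣ (w ^ (c * k) - 1) ∨
      ∃ j : ℕ, j < ℓ ∧
        (N : Zsqrtd D) ∣
          (Polynomial.aeval (w ^ (c * k * p ^ j)) (Polynomial.cyclotomic p ℤ)) := by
  haveI fN : Fact N.Prime := ⟨hNprime⟩
  haveI fp : Fact p.Prime := ⟨hp⟩
  have hprime := aux_prime_zsqrtd D N hNprime hJ
  set I : Ideal (Zsqrtd D) := Ideal.span {(N : Zsqrtd D)} with hIdef
  haveI hI : I.IsPrime := (Ideal.span_singleton_prime hprime.ne_zero).mpr hprime
  set R := Zsqrtd D ⧸ I with hRdef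
  let φ : Zsqrtd D →+* R := Ideal.Quotient.mk I
  have hker : ∀ z : Zsqrtd D, φ z = 0 ↔ (N : Zsqrtd D) ∣ z := fun z => by
    rw [Ideal.Quotient.eq_zero_iff_mem, Ideal.mem_span_singleton]
  haveI hchar : CharP R N := ⟨fun n => by
    have : ((n : R)) = φ ((n : Zsqrtd D)) := by simp [φ]
    rw [this, hker]
    rw [show ((N : Zsqrtd D)) = (((N : ℤ)) : Zsqrtd D) by push_cast; rfl,
      show ((n : Zsqrtd D)) = (((n : ℤ)) : Zsqrtd D) by push_cast; rfl,
      Zsqrtd.intCast_dvd_intCast]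
    exact_mod_cast Iff.rfl⟩
  let f : ZMod N →+* R := ZMod.castHom dvd_rfl R
  set s : R := φ ⟨0, 1⟩ with hs
  have hs2 : s * s = ((D : ℤ) : R) := by
    have hmul : (⟨0, 1⟩ : Zsqrtd D) * ⟨0, 1⟩ = ((D : ℤ) : Zsqrtd D) := by
      ext <;> simp
    rw [hs, ← map_mul, hmul, map_intCast]
  have hN2 : N / 2 * 2 + 1 = N := by
    have := Nat.odd_iff.mp hNodd
    omega
  have hDpow : (((D : ℤ) : R)) ^ (N / 2) = -1 := by
    have h1 : (((D : ℤ) : R)) = f (((D : ℤ) : ZMod N)) := by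
      rw [map_intCast]
    rw [h1, ← map_pow, ← legendreSym.eq_pow, jacobiSym.legendreSym.to_jacobiSym, hJ]
    rw [Int.cast_neg, Int.cast_one, map_neg, map_one]
  have hsN : s ^ N = -s := by
    calc s ^ N = (s * s) ^ (N / 2) * s := by
          rw [← pow_two, ← pow_mul, ← pow_succ]
          rw [Nat.mul_comm]
          rw [hN2]
      _ = -s := by rw [hs2, hDpow]; ring
  have frob : ∀ z : Zsqrtd D, φ z ^ N = φ (star z) := by
    intro z
    have hz : z = ((z.re : Zsqrtd D)) + ((z.im : Zsqrtd D)) * ⟨0, 1⟩ := by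
      ext <;> simp
    have hstarz : star z = ((z.re : Zsqrtd D)) - ((z.im : Zsqrtd D)) * ⟨0, 1⟩ := by
      ext <;> simp
    have hintpow : ∀ m : ℤ, ((m : R)) ^ N = ((m : R)) := by
      intro m
      have h1 : ((m : R)) = f ((m : ZMod N)) := by rw [map_intCast]
      rw [h1, ← map_pow, ZMod.pow_card]
    rw [hstarz]
    conv_lhs => rw [hz]
    rw [map_add, map_sub, map_mul]
    rw [add_pow_char (p := N)]
    rw [mul_pow, hsN]
    simp only [map_intCast]
    rw [hintpow, hintpow]
    ring
  have hnormdvd : (N : Zsqrtd D) ∣ ((w.norm : Zsqrtd D) - 1) := by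
    rw [show ((N : Zsqrtd D)) = (((N : ℤ)) : Zsqrtd D) by push_cast; rfl,
      show ((w.norm : Zsqrtd D) - 1) = (((w.norm - 1 : ℤ)) : Zsqrtd D) by push_cast; ring,
      Zsqrtd.intCast_dvd_intCast]
    exact hnorm
  have hφnorm : φ ((w.norm : Zsqrtd D)) = 1 := by
    have h0 : φ ((w.norm : Zsqrtd D) - 1) = 0 := (hker _).mpr hnormdvd
    rw [map_sub, map_one, sub_eq_zero] at h0
    exact h0
  have hwN1 : φ w ^ (N + 1) = 1 := by
    rw [pow_succ, frob, ← map_mul]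
    rw [show star w * w = (w.norm : Zsqrtd D) by
      rw [Zsqrtd.norm_eq_mul_conj]; ring]
    exact hφnorm
  have hNsucc : N + 1 = c * k * p ^ ℓ := by
    have h1 : 0 < c * k * p ^ ℓ := Nat.mul_pos (Nat.mul_pos hc hk) (Nat.pow_pos hp.pos)
    omega
  set x : R := φ w ^ (c * k) with hx
  have hxpow : x ^ (p ^ ℓ) = 1 := by
    rw [hx, ← pow_mul, ← hNsucc, hwN1]
  by_cases hx1 : x = 1
  · left
    have h0 : φ (w ^ (c * k) - 1) = 0 := by
      rw [map_sub, map_pow, map_one, ← hx, hx1, sub_self]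
    exact (hker _).mp h0
  · right
    have hfind : ∀ m : ℕ, x ^ (p ^ m) = 1 →
        ∃ j, j < m ∧ x ^ (p ^ j) ≠ 1 ∧ x ^ (p ^ (j + 1)) = 1 := by
      intro m
      induction m with
      | zero => intro h; simp at h; exact absurd h hx1
      | succ n ih =>
        intro h
        by_cases hn : x ^ (p ^ n) = 1
        · obtain ⟨j, hj, hj'⟩ := ih hn
          exact ⟨j, Nat.lt_succ_of_lt hj, hj'⟩
        · exact ⟨n, Nat.lt_succ_self n, hn, h⟩
    obtain ⟨j, hjℓ, hne, heq⟩ := hfind ℓ hxpow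
    refine ⟨j, hjℓ, ?_⟩
    set y : R := x ^ (p ^ j) with hy
    have hyp : y ^ p = 1 := by
      rw [hy, ← pow_mul, ← pow_succ]
      exact heq
    have hcyc : (aeval y (cyclotomic p ℤ)) * (y - 1) = 0 := by
      have h1 : aeval y (cyclotomic p ℤ) = eval y (cyclotomic p R) := by
        rw [aeval_def, eval₂_eq_eval_map, map_cyclotomic]
      rw [h1]
      have h2 := congrArg (eval y) (cyclotomic_prime_mul_X_sub_one R p)
      simp only [eval_mul, eval_sub, eval_pow, eval_X, eval_one] at h2
      rw [h2, hyp, sub_self]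
    have hcyc0 : aeval y (cyclotomic p ℤ) = 0 :=
      (mul_eq_zero.mp hcyc).resolve_right (sub_ne_zero.mpr hne)
    have hφy : φ (w ^ (c * k * p ^ j)) = y := by
      rw [map_pow, pow_mul, ← hx, ← hy]
    have hφcyc : φ (aeval (w ^ (c * k * p ^ j)) (cyclotomic p ℤ)) = 0 := by
      have h5 : φ (aeval (w ^ (c * k * p ^ j)) (cyclotomic p ℤ))
          = aeval (φ (w ^ (c * k * p ^ j))) (cyclotomic p ℤ) :=
        (aeval_algHom_apply φ.toIntAlgHom _ _).symm
      rw [h5, hφy, hcyc0]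
    exact (hker _).mp hφcyc
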